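/- With the parametrization ρ(u) = (ρ₁(u), ρ₂(u)) of the level set h_w⁻¹(M) as defined (A, B as above), the curve ρ : [0,2π] → ℝ² is regular, i.e. (ρ₁'(u), ρ₂'(u)) ≠ (0,0) for all u, and is a closed curve: ρ(0) = ρ(2π). -/

import Mathlib

open Real

lemma aux_deriv (c B k : ℝ) (hc : 0 < c) (hB : 0 ≤ B) (hk : 0 ≤ k) (u : ℝ)
    (hs : Real.sin u = 0) (hc2 : Real.cos u ^ 2 = 1) :
    HasDerivAt (fun u => (-1 + Real.sqrt (c + B * Real.cos u ^ 2) * Real.sin u) /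
      (2 * Real.sqrt (1 + k * Real.cos u ^ 2)))
      (Real.cos u * Real.sqrt (c + B) / (2 * Real.sqrt (1 + k))) u := by
  have hpos1 : 0 < c + B * Real.cos u ^ 2 :=
    add_pos_of_pos_of_nonneg hc (mul_nonneg hB (sq_nonneg _))
  have hpos2 : 0 < 1 + k * Real.cos u ^ 2 :=
    add_pos_of_pos_of_nonneg one_pos (mul_nonneg hk (sq_nonneg _))
  have h1 : HasDerivAt (fun u => c + B * Real.cos u ^ 2)
      (B * (2 * Real.cos u ^ 1 * -Real.sin u)) u :=
    (((Real.hasDerivAt_cos u).pow 2).const_mul B).const_add c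
  have hf : HasDerivAt (fun u => Real.sqrt (c + B * Real.cos u ^ 2))
      (1 / (2 * Real.sqrt (c + B * Real.cos u ^ 2)) * (B * (2 * Real.cos u ^ 1 * -Real.sin u))) u :=
    (Real.hasDerivAt_sqrt hpos1.ne').comp u h1
  have h2 : HasDerivAt (fun u => 1 + k * Real.cos u ^ 2)
      (k * (2 * Real.cos u ^ 1 * -Real.sin u)) u :=
    (((Real.hasDerivAt_cos u).pow 2).const_mul k).const_add 1
  have hg : HasDerivAt (fun u => 2 * Real.sqrt (1 + k * Real.cos u ^ 2))
      (2 * (1 / (2 * Real.sqrt (1 + k * Real.cos u ^ 2)) * (k * (2 * Real.cos u ^ 1 * -Real.sin u)))) u :=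
    (((Real.hasDerivAt_sqrt hpos2.ne').comp u h2)).const_mul 2
  have hn : HasDerivAt (fun u => -1 + Real.sqrt (c + B * Real.cos u ^ 2) * Real.sin u)
      (1 / (2 * Real.sqrt (c + B * Real.cos u ^ 2)) * (B * (2 * Real.cos u ^ 1 * -Real.sin u)) * Real.sin u
        + Real.sqrt (c + B * Real.cos u ^ 2) * Real.cos u) u :=
    (hf.mul (Real.hasDerivAt_sin u)).const_add (-1)
  have hgne : 2 * Real.sqrt (1 + k * Real.cos u ^ 2) ≠ 0 := by positivity
  have H := hn.div hg hgne
  refine H.congr_deriv ?_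
  have e1 : c + B * Real.cos u ^ 2 = c + B := by rw [hc2]; ring
  have e2 : (1:ℝ) + k * Real.cos u ^ 2 = 1 + k := by rw [hc2]; ring
  rw [e1, e2, hs]
  have hsq : Real.sqrt (1 + k) > 0 := Real.sqrt_pos.mpr (by linarith)
  field_simp
  ring

theorem heart_parametrization_regular_closed (M w : ℝ) (hM : -(1 / 4) < M) (hw : 0 < w)
    (A B : ℝ)
    (hA : A = Real.sqrt (-1 + M * w ^ 2 +
        Real.sqrt (1 + (1 + 2 * M) * w ^ 2 + M ^ 2 * w ^ 4)) / (Real.sqrt 2 * w))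
    (hB : B = (2 + 2 * M ^ 2 * w ^ 4 + w ^ 2 + 2 * (M * w ^ 2 - 1) *
        Real.sqrt (1 + (1 + 2 * M) * w ^ 2 + M ^ 2 * w ^ 4)) / w ^ 2)
    (ρ₁ ρ₂ : ℝ → ℝ)
    (hρ₁ : ∀ u, ρ₁ u = A * Real.cos u)
    (hρ₂ : ∀ u, ρ₂ u =
      (-1 + Real.sqrt (1 + 4 * M + B * (Real.cos u) ^ 2) * Real.sin u) /
        (2 * Real.sqrt (1 + w ^ 2 * A ^ 2 * (Real.cos u) ^ 2))) :
    (∀ u ∈ Set.Icc (0 : ℝ) (2 * Real.pi), (deriv ρ₁ u, deriv ρ₂ u) ≠ (0, 0)) ∧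
    (ρ₁ 0, ρ₂ 0) = (ρ₁ (2 * Real.pi), ρ₂ (2 * Real.pi)) := by
  have hρ₁f : ρ₁ = fun u => A * Real.cos u := funext hρ₁
  have hρ₂f : ρ₂ = fun u => (-1 + Real.sqrt (1 + 4 * M + B * (Real.cos u) ^ 2) * Real.sin u) /
        (2 * Real.sqrt (1 + w ^ 2 * A ^ 2 * (Real.cos u) ^ 2)) := funext hρ₂
  set S := Real.sqrt (1 + (1 + 2 * M) * w ^ 2 + M ^ 2 * w ^ 4) with hS
  have harg : (0:ℝ) ≤ 1 + (1 + 2 * M) * w ^ 2 + M ^ 2 * w ^ 4 := by nlinarith [sq_nonneg (M * w ^ 2 - 1), sq_nonneg w]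
  have hS2 : S ^ 2 = 1 + (1 + 2 * M) * w ^ 2 + M ^ 2 * w ^ 4 := Real.sq_sqrt harg
  have hS0 : 0 ≤ S := Real.sqrt_nonneg _
  have hw2 : (0:ℝ) < w ^ 2 := by positivity
  have h4M : (0:ℝ) < 1 + 4 * M := by linarith
  have hinner : (0:ℝ) < -1 + M * w ^ 2 + S := by nlinarith [hS2, hS0]
  have hApos : 0 < A := by
    rw [hA]
    exact div_pos (Real.sqrt_pos.mpr hinner) (by positivity)
  have hB0 : 0 ≤ B := by
    rw [hB]
    have : 2 + 2 * M ^ 2 * w ^ 4 + w ^ 2 + 2 * (M * w ^ 2 - 1) * S = (S + M * w ^ 2 - 1) ^ 2 := by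
      nlinarith [hS2]
    rw [this]; positivity
  have hc : (0:ℝ) < 1 + 4 * M := h4M
  have hk : (0:ℝ) ≤ w ^ 2 * A ^ 2 := by positivity
  constructor
  · intro u _
    by_cases hsu : Real.sin u = 0
    · -- second component nonzero
      have hc2 : Real.cos u ^ 2 = 1 := by
        have := Real.sin_sq_add_cos_sq u
        rw [hsu] at this; nlinarith
      have hd := aux_deriv (1 + 4 * M) B (w ^ 2 * A ^ 2) hc hB0 hk u hsu hc2
      rw [← hρ₂f] at hd
      have hval : deriv ρ₂ u = Real.cos u * Real.sqrt (1 + 4 * M + B) / (2 * Real.sqrt (1 + w ^ 2 * A ^ 2)) := hd.deriv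
      have hcosne : Real.cos u ≠ 0 := by
        intro h; rw [h] at hc2; norm_num at hc2
      have h1 : Real.sqrt (1 + 4 * M + B) > 0 := Real.sqrt_pos.mpr (by linarith)
      have h2 : Real.sqrt (1 + w ^ 2 * A ^ 2) > 0 := Real.sqrt_pos.mpr (by linarith)
      intro hcontra
      have := congrArg Prod.snd hcontra
      simp only at this
      rw [hval] at this
      rcases div_eq_zero_iff.mp this with h | h
      · rcases mul_eq_zero.mp h with h' | h'
        · exact hcosne h'
        · exact h1.ne' h'
      · exact absurd h (by positivity)
    · -- first component nonzero
      have hd : HasDerivAt ρ₁ (A * -Real.sin u) u := by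
        rw [hρ₁f]; exact (Real.hasDerivAt_cos u).const_mul A
      have hval : deriv ρ₁ u = A * -Real.sin u := hd.deriv
      intro hcontra
      have := congrArg Prod.fst hcontra
      simp only at this
      rw [hval] at this
      rcases mul_eq_zero.mp this with h | h
      · exact hApos.ne' h
      · exact hsu (by linarith [neg_eq_zero.mp h])
  · rw [hρ₁ 0, hρ₁ (2 * Real.pi), hρ₂ 0, hρ₂ (2 * Real.pi)]
    simp [Real.cos_two_pi, Real.sin_two_pi]
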